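/- Let Y be a disjunction-of-conjunctions gate over disjoint blocks B_1,…,B_K, and let v ∈ {0,1}^n be an actual input state in which no block is all-ones (so the actual outcome is Y = 0). Then a nonempty occurrence x = v|S has actual effect {Y = 0} (i.e., α_e(x) > 0) if and only if v_i = 0 for every i ∈ S and |S ∩ B_j| ≤ 1 for every j; every other nonempty occurrence — in particular any occurrence fixing an input to 1, and any all-zeros occurrence fixing two or more inputs of the same conjunction to 0 — is reducible, α_e(x) ≤ 0. -/

import Mathlib

open Finset

/-- Disjunction-of-conjunctions gate over blocks `B 1, …, B K`: outputs `1` iff some block has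
all of its inputs in state `1`. -/
def DOC {n K : ℕ} (B : Fin K → Finset (Fin n)) (u : Fin n → Bool) : Bool :=
  decide (∃ j, ∀ i ∈ B j, u i = true)

/-- Effect probability `π(y | v|S) = 2^{-(n-|S|)} · #{u : u agrees with v on S ∧ Y u = y}`. -/
noncomputable def effProb {n : ℕ} (Y : (Fin n → Bool) → Bool) (v : Fin n → Bool)
    (S : Finset (Fin n)) (y : Bool) : ℝ :=
  ((univ.filter fun u : Fin n → Bool => (∀ i ∈ S, u i = v i) ∧ Y u = y).card : ℝ) /
    2 ^ (n - S.card)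

/-- Irreducible effect ratio of a nonempty occurrence `v|S` on outcome `y`:
`α_e = log₂( π(y | v|S) / max_{T ⊊ S} π(y | v|T) )`. -/
noncomputable def alphaE {n : ℕ} (Y : (Fin n → Bool) → Bool) (v : Fin n → Bool)
    (S : Finset (Fin n)) (hS : S.Nonempty) (y : Bool) : ℝ :=
  Real.logb 2 (effProb Y v S y /
    S.ssubsets.sup' ⟨∅, Finset.empty_mem_ssubsets hS⟩ (fun T => effProb Y v T y))

namespace DocAux

variable {n K : ℕ}

lemma doc_false_iff (B : Fin K → Finset (Fin n)) (u : Fin n → Bool) :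
    DOC B u = false ↔ ∀ j, ∃ i ∈ B j, u i = false := by
  rw [DOC, decide_eq_false_iff_not]
  push_neg
  simp [Bool.not_eq_true]

lemma doc_update_false (B : Fin K → Finset (Fin n)) (u : Fin n → Bool) (i : Fin n)
    (h : DOC B u = false) : DOC B (Function.update u i false) = false := by
  rw [doc_false_iff] at h ⊢
  intro j
  obtain ⟨k, hk, hku⟩ := h j
  refine ⟨k, hk, ?_⟩
  rcases eq_or_ne k i with rfl | hne
  · simp
  · rw [Function.update_of_ne hne]
    exact hku

lemma doc_update_true (B : Fin K → Finset (Fin n))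
    (hBdisj : ∀ j j', j ≠ j' → Disjoint (B j) (B j'))
    (u : Fin n → Bool) (i i' : Fin n) (j : Fin K)
    (hj : i ∈ B j) (hj' : i' ∈ B j) (hne : i' ≠ i) (hi' : u i' = false)
    (h : DOC B u = false) : DOC B (Function.update u i true) = false := by
  rw [doc_false_iff] at h ⊢
  intro j0
  rcases eq_or_ne j0 j with rfl | hj0
  · exact ⟨i', hj', by rw [Function.update_of_ne hne]; exact hi'⟩
  · obtain ⟨k, hk, hku⟩ := h j0
    have hki : k ≠ i := by
      intro hki
      exact Finset.disjoint_left.mp (hBdisj j0 j hj0) hk (hki ▸ hj)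
    exact ⟨k, hk, by rw [Function.update_of_ne hki]; exact hku⟩

/-- number of completions agreeing with `v` on `S` on which the gate is off -/
noncomputable def cnt (B : Fin K → Finset (Fin n)) (v : Fin n → Bool)
    (S : Finset (Fin n)) : ℕ :=
  (univ.filter fun u : Fin n → Bool => (∀ k ∈ S, u k = v k) ∧ DOC B u = false).card

/-- completions agreeing with `v` on `S.erase i` but flipped at `i`, gate off -/
noncomputable def cntFlip (B : Fin K → Finset (Fin n)) (v : Fin n → Bool)
    (S : Finset (Fin n)) (i : Fin n) : ℕ :=
  (univ.filter fun u : Fin n → Bool =>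
    (∀ k ∈ S.erase i, u k = v k) ∧ u i = !(v i) ∧ DOC B u = false).card

lemma effProb_eq (B : Fin K → Finset (Fin n)) (v : Fin n → Bool) (S : Finset (Fin n)) :
    effProb (DOC B) v S false = (cnt B v S : ℝ) / 2 ^ (n - S.card) := rfl

lemma cnt_pos (B : Fin K → Finset (Fin n)) (v : Fin n → Bool)
    (hv : ∀ j, ¬ ∀ i ∈ B j, v i = true) (S : Finset (Fin n)) :
    0 < cnt B v S := by
  rw [cnt]
  apply Finset.card_pos.mpr
  refine ⟨v, Finset.mem_filter.mpr ⟨Finset.mem_univ v, fun k _ => rfl, ?_⟩⟩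
  rw [doc_false_iff]
  intro j
  have := hv j
  push_neg at this
  obtain ⟨k, hk, hvk⟩ := this
  exact ⟨k, hk, by simpa using hvk⟩

lemma effProb_pos (B : Fin K → Finset (Fin n)) (v : Fin n → Bool)
    (hv : ∀ j, ¬ ∀ i ∈ B j, v i = true) (S : Finset (Fin n)) :
    0 < effProb (DOC B) v S false := by
  rw [effProb_eq]
  have := cnt_pos B v hv S
  positivity

lemma cnt_split (B : Fin K → Finset (Fin n)) (v : Fin n → Bool)
    (S : Finset (Fin n)) (i : Fin n) (hi : i ∈ S) :
    cnt B v (S.erase i) = cnt B v S + cntFlip B v S i := by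
  classical
  have hsplit := Finset.card_filter_add_card_filter_not
    (s := univ.filter fun u : Fin n → Bool => (∀ k ∈ S.erase i, u k = v k) ∧ DOC B u = false)
    (p := fun u => u i = v i)
  rw [Finset.filter_filter, Finset.filter_filter] at hsplit
  have h1 : (univ.filter fun u : Fin n → Bool => (∀ k ∈ S, u k = v k) ∧ DOC B u = false)
      = univ.filter (fun u : Fin n → Bool =>
          ((∀ k ∈ S.erase i, u k = v k) ∧ DOC B u = false) ∧ u i = v i) := by
    ext u
    simp only [Finset.mem_filter, Finset.mem_univ, true_and, Finset.mem_erase]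
    constructor
    · rintro ⟨ha, hd⟩
      exact ⟨⟨fun k hk => ha k hk.2, hd⟩, ha i hi⟩
    · rintro ⟨⟨ha, hd⟩, hui⟩
      refine ⟨fun k hk => ?_, hd⟩
      rcases eq_or_ne k i with rfl | hne
      · exact hui
      · exact ha k ⟨hne, hk⟩
  have h2 : (univ.filter fun u : Fin n → Bool =>
        (∀ k ∈ S.erase i, u k = v k) ∧ u i = !(v i) ∧ DOC B u = false)
      = univ.filter (fun u : Fin n → Bool =>
          ((∀ k ∈ S.erase i, u k = v k) ∧ DOC B u = false) ∧ ¬ u i = v i) := by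
    ext u
    simp only [Finset.mem_filter, Finset.mem_univ, true_and]
    constructor
    · rintro ⟨ha, hflip, hd⟩
      refine ⟨⟨ha, hd⟩, ?_⟩
      rw [hflip]
      cases v i <;> simp
    · rintro ⟨⟨ha, hd⟩, hne⟩
      refine ⟨ha, ?_, hd⟩
      cases hvi : v i <;> cases hui : u i <;> simp_all
  rw [cnt, cnt, cntFlip, h1, h2]
  exact hsplit.symm

lemma effProb_erase (B : Fin K → Finset (Fin n)) (v : Fin n → Bool)
    (S : Finset (Fin n)) (i : Fin n) (hi : i ∈ S) :
    effProb (DOC B) v (S.erase i) false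
      = ((cnt B v S : ℝ) + cntFlip B v S i) / 2 ^ (n - S.card + 1) := by
  rw [effProb_eq, cnt_split B v S i hi]
  have h1 : (S.erase i).card = S.card - 1 := Finset.card_erase_of_mem hi
  have h2 : S.card ≤ n := by
    have := Finset.card_le_univ S
    simpa using this
  have h3 : 1 ≤ S.card := Finset.card_pos.mpr ⟨i, hi⟩
  have h4 : n - (S.card - 1) = n - S.card + 1 := by omega
  rw [h1, h4]
  push_cast
  ring

lemma effProb_le_erase (B : Fin K → Finset (Fin n)) (v : Fin n → Bool)
    (S : Finset (Fin n)) (i : Fin n) (hi : i ∈ S)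
    (h : cnt B v S ≤ cntFlip B v S i) :
    effProb (DOC B) v S false ≤ effProb (DOC B) v (S.erase i) false := by
  rw [effProb_eq, effProb_erase B v S i hi, pow_succ]
  rw [div_le_div_iff₀ (by positivity) (by positivity)]
  have hc : (cnt B v S : ℝ) ≤ cntFlip B v S i := Nat.cast_le.mpr h
  have hp : (0:ℝ) < 2 ^ (n - S.card) := by positivity
  nlinarith

lemma erase_lt_effProb (B : Fin K → Finset (Fin n)) (v : Fin n → Bool)
    (S : Finset (Fin n)) (i : Fin n) (hi : i ∈ S)
    (h : cntFlip B v S i < cnt B v S) :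
    effProb (DOC B) v (S.erase i) false < effProb (DOC B) v S false := by
  rw [effProb_erase B v S i hi, effProb_eq, pow_succ]
  rw [div_lt_div_iff₀ (by positivity) (by positivity)]
  have hc : (cntFlip B v S i : ℝ) < cnt B v S := by exact_mod_cast h
  have hp : (0:ℝ) < 2 ^ (n - S.card) := by positivity
  nlinarith

lemma cnt_le_cntFlip_of_true (B : Fin K → Finset (Fin n)) (v : Fin n → Bool)
    (S : Finset (Fin n)) (i : Fin n) (hi : i ∈ S) (hvi : v i = true) :
    cnt B v S ≤ cntFlip B v S i := by
  rw [cnt, cntFlip]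
  apply Finset.card_le_card_of_injOn (fun u => Function.update u i false)
  · intro u hu
    simp only [Finset.mem_coe, Finset.mem_filter, Finset.mem_univ, true_and] at hu ⊢
    obtain ⟨ha, hd⟩ := hu
    refine ⟨fun k hk => ?_, ?_, doc_update_false B u i hd⟩
    · rw [Function.update_of_ne (Finset.mem_erase.mp hk).1]
      exact ha k (Finset.mem_erase.mp hk).2
    · rw [Function.update_self, hvi]
      rfl
  · intro u1 h1 u2 h2 heq
    simp only [Finset.coe_filter, Set.mem_setOf_eq, Finset.mem_univ, true_and] at h1 h2
    funext k
    rcases eq_or_ne k i with rfl | hne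
    · rw [h1.1 k hi, h2.1 k hi]
    · have := congrFun heq k
      simp only [Function.update_of_ne hne] at this
      exact this

lemma cnt_le_cntFlip_of_dup (B : Fin K → Finset (Fin n))
    (hBdisj : ∀ j j', j ≠ j' → Disjoint (B j) (B j')) (v : Fin n → Bool)
    (S : Finset (Fin n)) (i i' : Fin n) (j : Fin K)
    (hi : i ∈ S) (hi' : i' ∈ S) (hne : i' ≠ i) (hj : i ∈ B j) (hj' : i' ∈ B j)
    (hvi : v i = false) (hvi' : v i' = false) :
    cnt B v S ≤ cntFlip B v S i := by
  rw [cnt, cntFlip]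
  apply Finset.card_le_card_of_injOn (fun u => Function.update u i true)
  · intro u hu
    simp only [Finset.mem_coe, Finset.mem_filter, Finset.mem_univ, true_and] at hu ⊢
    obtain ⟨ha, hd⟩ := hu
    have hui' : u i' = false := by rw [ha i' hi', hvi']
    refine ⟨fun k hk => ?_, ?_, doc_update_true B hBdisj u i i' j hj hj' hne hui' hd⟩
    · rw [Function.update_of_ne (Finset.mem_erase.mp hk).1]
      exact ha k (Finset.mem_erase.mp hk).2
    · rw [Function.update_self, hvi]
      rfl
  · intro u1 h1 u2 h2 heq
    simp only [Finset.coe_filter, Set.mem_setOf_eq, Finset.mem_univ, true_and] at h1 h2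
    funext k
    rcases eq_or_ne k i with rfl | hne
    · rw [h1.1 k hi, h2.1 k hi]
    · have := congrFun heq k
      simp only [Function.update_of_ne hne] at this
      exact this

lemma cntFlip_lt_cnt_of_good (B : Fin K → Finset (Fin n))
    (hBdisj : ∀ j j', j ≠ j' → Disjoint (B j) (B j')) (v : Fin n → Bool)
    (hv : ∀ j, ¬ ∀ i ∈ B j, v i = true)
    (S : Finset (Fin n)) (i : Fin n) (j : Fin K) (hi : i ∈ S) (hj : i ∈ B j)
    (hzero : ∀ k ∈ S, v k = false) (hone : ∀ j', (S ∩ B j').card ≤ 1) :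
    cntFlip B v S i < cnt B v S := by
  classical
  have hvi : v i = false := hzero i hi
  -- the witness configuration: all of block `j` on except `i`, rest as in `v`
  set w : Fin n → Bool := fun k => if k ∈ B j then (if k = i then false else true) else v k
    with hw
  have hwiB : ∀ k, k ∈ B j → k ≠ i → w k = true := by
    intro k hk hki
    simp [hw, hk, hki]
  have hwi : w i = false := by simp [hw, hj]
  have hwout : ∀ k, k ∉ B j → w k = v k := by
    intro k hk
    simp [hw, hk]
  have hwA : w ∈ (univ.filter fun u : Fin n → Bool =>
      (∀ k ∈ S, u k = v k) ∧ DOC B u = false) := by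
    refine Finset.mem_filter.mpr ⟨Finset.mem_univ w, fun k hk => ?_, ?_⟩
    · by_cases hkB : k ∈ B j
      · have hk_eq : k = i := by
          have h1 : k ∈ S ∩ B j := Finset.mem_inter.mpr ⟨hk, hkB⟩
          have h2 : i ∈ S ∩ B j := Finset.mem_inter.mpr ⟨hi, hj⟩
          exact Finset.card_le_one.mp (hone j) k h1 i h2
        rw [hk_eq, hwi, hvi]
      · exact hwout k hkB
    · rw [doc_false_iff]
      intro j0
      rcases eq_or_ne j0 j with rfl | hj0
      · exact ⟨i, hj, hwi⟩
      · have := hv j0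
        push_neg at this
        obtain ⟨k, hk, hvk⟩ := this
        have hkB : k ∉ B j := Finset.disjoint_left.mp (hBdisj j0 j hj0) hk
        exact ⟨k, hk, by rw [hwout k hkB]; simpa using hvk⟩
  have hwon : DOC B (Function.update w i true) = true := by
    rw [DOC, decide_eq_true_iff]
    refine ⟨j, fun k hk => ?_⟩
    rcases eq_or_ne k i with rfl | hne
    · rw [Function.update_self]
    · rw [Function.update_of_ne hne]
      exact hwiB k hk hne
  have hkey : cntFlip B v S i ≤ ((univ.filter fun u : Fin n → Bool =>
      (∀ k ∈ S, u k = v k) ∧ DOC B u = false).erase w).card := by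
    rw [cntFlip]
    apply Finset.card_le_card_of_injOn (fun u => Function.update u i false)
    · intro u hu
      simp only [Finset.mem_coe, Finset.mem_filter, Finset.mem_univ, true_and] at hu
      obtain ⟨ha, hflip, hd⟩ := hu
      have hui : u i = true := by rw [hflip, hvi]; rfl
      refine Finset.mem_erase.mpr ⟨?_, Finset.mem_filter.mpr ⟨Finset.mem_univ _,
        fun k hk => ?_, doc_update_false B u i hd⟩⟩
      · -- update u i false ≠ w
        intro hcontra
        beta_reduce at hcontra
        have hrec : Function.update (Function.update u i false) i true = u := by
          funext k
          rcases eq_or_ne k i with rfl | hne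
          · rw [Function.update_self, hui]
          · rw [Function.update_of_ne hne, Function.update_of_ne hne]
        have : DOC B u = true := by
          rw [← hrec, hcontra]
          exact hwon
        rw [this] at hd
        exact Bool.noConfusion hd
      · rcases eq_or_ne k i with rfl | hne
        · beta_reduce
          rw [Function.update_self, hvi]
        · beta_reduce
          rw [Function.update_of_ne hne]
          exact ha k (Finset.mem_erase.mpr ⟨hne, hk⟩)
    · intro u1 h1 u2 h2 heq
      simp only [Finset.coe_filter, Set.mem_setOf_eq, Finset.mem_univ, true_and] at h1 h2
      funext k
      rcases eq_or_ne k i with rfl | hne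
      · rw [h1.2.1, h2.2.1]
      · have := congrFun heq k
        simp only [Function.update_of_ne hne] at this
        exact this
  calc cntFlip B v S i ≤ _ := hkey
    _ < cnt B v S := Finset.card_erase_lt_of_mem hwA

end DocAux

open DocAux in
theorem doc_actual_effects_of_off_state (n K : ℕ) (hK : 1 ≤ K)
    (B : Fin K → Finset (Fin n)) (hBne : ∀ j, (B j).Nonempty)
    (hBdisj : ∀ j j', j ≠ j' → Disjoint (B j) (B j'))
    (hBcover : ∀ i : Fin n, ∃ j, i ∈ B j)
    (v : Fin n → Bool) (hv : ∀ j, ¬ ∀ i ∈ B j, v i = true)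
    (S : Finset (Fin n)) (hS : S.Nonempty) :
    (0 < alphaE (DOC B) v S hS false ↔
      (∀ i ∈ S, v i = false) ∧ ∀ j, (S ∩ B j).card ≤ 1) ∧
    (¬ ((∀ i ∈ S, v i = false) ∧ ∀ j, (S ∩ B j).card ≤ 1) →
      alphaE (DOC B) v S hS false ≤ 0) := by
  classical
  -- strict single step for good occurrences
  have step_lt : ∀ (S' : Finset (Fin n)), (∀ k ∈ S', v k = false) →
      (∀ j', (S' ∩ B j').card ≤ 1) → ∀ i ∈ S',
      effProb (DOC B) v (S'.erase i) false < effProb (DOC B) v S' false := by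
    intro S' hz ho i hiS
    obtain ⟨j, hj⟩ := hBcover i
    exact erase_lt_effProb B v S' i hiS
      (cntFlip_lt_cnt_of_good B hBdisj v hv S' i j hiS hj hz ho)
  -- monotonicity below a good occurrence
  have mono : ∀ (m : ℕ) (S' T : Finset (Fin n)), (∀ k ∈ S', v k = false) →
      (∀ j', (S' ∩ B j').card ≤ 1) → T ⊆ S' → (S' \ T).card = m →
      effProb (DOC B) v T false ≤ effProb (DOC B) v S' false := by
    intro m
    induction m with
    | zero =>
        intro S' T hz ho hsub hcard
        have : S' = T := by
          have h0 : S' \ T = ∅ := Finset.card_eq_zero.mp hcard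
          have h1 : S' ⊆ T := by
            intro x hx
            by_contra hxT
            exact absurd h0 (Finset.ne_empty_of_mem (Finset.mem_sdiff.mpr ⟨hx, hxT⟩))
          exact Finset.Subset.antisymm h1 hsub
        rw [this]
    | succ m ih =>
        intro S' T hz ho hsub hcard
        have hne : (S' \ T).Nonempty := by
          rw [← Finset.card_pos, hcard]; omega
        obtain ⟨i, hi⟩ := hne
        rw [Finset.mem_sdiff] at hi
        have hTsub : T ⊆ S'.erase i := Finset.subset_erase.mpr ⟨hsub, hi.2⟩
        have hz' : ∀ k ∈ S'.erase i, v k = false := fun k hk => hz k (Finset.mem_of_mem_erase hk)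
        have ho' : ∀ j', ((S'.erase i) ∩ B j').card ≤ 1 := fun j' =>
          le_trans (Finset.card_le_card (Finset.inter_subset_inter_right
            (Finset.erase_subset i S'))) (ho j')
        have hcard' : ((S'.erase i) \ T).card = m := by
          have : (S'.erase i) \ T = (S' \ T).erase i := by
            ext x
            simp only [Finset.mem_sdiff, Finset.mem_erase]
            tauto
          rw [this, Finset.card_erase_of_mem (Finset.mem_sdiff.mpr hi), hcard]
          omega
        calc effProb (DOC B) v T false ≤ effProb (DOC B) v (S'.erase i) false :=
              ih (S'.erase i) T hz' ho' hTsub hcard'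
          _ ≤ effProb (DOC B) v S' false := le_of_lt (step_lt S' hz ho i hi.1)
  -- strict monotonicity below a good occurrence
  have strict : ∀ (T : Finset (Fin n)), (∀ k ∈ S, v k = false) →
      (∀ j', (S ∩ B j').card ≤ 1) → T ⊂ S →
      effProb (DOC B) v T false < effProb (DOC B) v S false := by
    intro T hz ho hT
    have hsub := hT.subset
    obtain ⟨x, hxS, hxT⟩ := Finset.exists_of_ssubset hT
    have hTsub : T ⊆ S.erase x := Finset.subset_erase.mpr ⟨hsub, hxT⟩
    have hz' : ∀ k ∈ S.erase x, v k = false := fun k hk => hz k (Finset.mem_of_mem_erase hk)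
    have ho' : ∀ j', ((S.erase x) ∩ B j').card ≤ 1 := fun j' =>
      le_trans (Finset.card_le_card (Finset.inter_subset_inter_right
        (Finset.erase_subset x S))) (ho j')
    calc effProb (DOC B) v T false ≤ effProb (DOC B) v (S.erase x) false :=
          mono ((S.erase x) \ T).card (S.erase x) T hz' ho' hTsub rfl
      _ < effProb (DOC B) v S false := step_lt S hz ho x hxS
  -- the denominator
  set D := S.ssubsets.sup' ⟨∅, Finset.empty_mem_ssubsets hS⟩
      (fun T => effProb (DOC B) v T false) with hD
  have hDpos : 0 < D := by
    have hemp : effProb (DOC B) v ∅ false ≤ D :=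
      Finset.le_sup' (fun T => effProb (DOC B) v T false) (Finset.empty_mem_ssubsets hS)
    exact lt_of_lt_of_le (effProb_pos B v hv ∅) hemp
  have hbad : ¬ ((∀ i ∈ S, v i = false) ∧ ∀ j, (S ∩ B j).card ≤ 1) →
      alphaE (DOC B) v S hS false ≤ 0 := by
    intro hng
    -- find i ∈ S removable without decreasing the probability
    have hkey : ∃ i ∈ S, cnt B v S ≤ cntFlip B v S i := by
      by_cases hall : ∀ i ∈ S, v i = false
      · have hex : ∃ j, ¬ (S ∩ B j).card ≤ 1 := by
          by_contra hc
          push_neg at hc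
          exact hng ⟨hall, hc⟩
        obtain ⟨j, hj⟩ := hex
        have h2 : 1 < (S ∩ B j).card := by omega
        obtain ⟨i, hi, i', hi', hne⟩ := Finset.one_lt_card.mp h2
        rw [Finset.mem_inter] at hi hi'
        exact ⟨i, hi.1, cnt_le_cntFlip_of_dup B hBdisj v S i i' j hi.1 hi'.1
          (fun h => hne (h.symm)) hi.2 hi'.2 (hall i hi.1) (hall i' hi'.1)⟩
      · push_neg at hall
        obtain ⟨i, hiS, hvi⟩ := hall
        have hvi' : v i = true := by
          cases h : v i
          · exact absurd h hvi
          · rfl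
        exact ⟨i, hiS, cnt_le_cntFlip_of_true B v S i hiS hvi'⟩
    obtain ⟨i, hiS, hle⟩ := hkey
    have hstep := effProb_le_erase B v S i hiS hle
    have hDe : effProb (DOC B) v (S.erase i) false ≤ D :=
      Finset.le_sup' (fun T => effProb (DOC B) v T false)
        (Finset.mem_ssubsets.mpr (Finset.erase_ssubset hiS))
    have hle1 : effProb (DOC B) v S false / D ≤ 1 :=
      (div_le_one hDpos).mpr (le_trans hstep hDe)
    have h0le : 0 ≤ effProb (DOC B) v S false / D :=
      le_of_lt (div_pos (effProb_pos B v hv S) hDpos)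
    exact Real.logb_nonpos (by norm_num) h0le hle1
  constructor
  · constructor
    · intro hpos
      by_contra hng
      exact absurd hpos (not_lt.mpr (hbad hng))
    · rintro ⟨hz, ho⟩
      have hlt : D < effProb (DOC B) v S false := by
        rw [hD]
        refine (Finset.sup'_lt_iff (H := _)).mpr ?_
        intro T hT
        exact strict T hz ho (Finset.mem_ssubsets.mp hT)
      have h1 : 1 < effProb (DOC B) v S false / D := (one_lt_div hDpos).mpr hlt
      exact Real.logb_pos (by norm_num) h1
  · exact hbad
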